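/- arXiv:1910.11998 — 3 statements merged into one kernel-verified Lean document; each statement's English description precedes it below -/
import Mathlib

section
/- Let p and q be probability density functions on ℝⁿ (nonnegative, integrating to 1) with q(u) > 0 and p(u) > 0 for all u. Among all measurable functions T : ℝⁿ → ℝ, the functional F(T) = ∫ p(u)·log(1 − σ(T(u))) du + ∫ q(u)·log(σ(T(u))) du is maximized by T*(u) = log q(u) − log p(u), where σ is the logistic sigmoid; i.e., F(T) ≤ F(T*) for all measurable T. -/
open MeasureTheory

lemma key_ineq (a b s : ℝ) (ha : 0 < a) (hb : 0 < b) (hs0 : 0 < s) (hs1 : s < 1) :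
    a * Real.log (1 - s) + b * Real.log s ≤
      a * Real.log (a / (a + b)) + b * Real.log (b / (a + b)) := by
  have hab : 0 < a + b := by linarith
  have h1s : 0 < 1 - s := by linarith
  have h1 : Real.log ((1 - s) * (a + b) / a) ≤ (1 - s) * (a + b) / a - 1 :=
    Real.log_le_sub_one_of_pos (by positivity)
  have h2 : Real.log (s * (a + b) / b) ≤ s * (a + b) / b - 1 :=
    Real.log_le_sub_one_of_pos (by positivity)
  have e1 : Real.log ((1 - s) * (a + b) / a) =
      Real.log (1 - s) - Real.log (a / (a + b)) := by
    rw [Real.log_div (by positivity) ha.ne', Real.log_mul h1s.ne' hab.ne',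
      Real.log_div ha.ne' hab.ne']
    ring
  have e2 : Real.log (s * (a + b) / b) =
      Real.log s - Real.log (b / (a + b)) := by
    rw [Real.log_div (by positivity) hb.ne', Real.log_mul hs0.ne' hab.ne',
      Real.log_div hb.ne' hab.ne']
    ring
  rw [e1] at h1
  rw [e2] at h2
  have h1' := mul_le_mul_of_nonneg_left h1 ha.le
  have h2' := mul_le_mul_of_nonneg_left h2 hb.le
  have hfa : a * ((1 - s) * (a + b) / a - 1) = (1 - s) * (a + b) - a := by
    field_simp
  have hfb : b * (s * (a + b) / b - 1) = s * (a + b) - b := by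
    field_simp
  nlinarith [h1', h2']

/-- The functional `F(T) = ∫ p log(1 - σ(T)) + ∫ q log(σ(T))` over measurable `T : ℝⁿ → ℝ`
is maximized by the log-density ratio `T*(u) = log q(u) - log p(u)`. -/
theorem stmt_3 (n : ℕ) (σ : ℝ → ℝ) (hσ : ∀ x, σ x = 1 / (1 + Real.exp (-x)))
    (p q : (Fin n → ℝ) → ℝ) (hpm : Measurable p) (hqm : Measurable q)
    (hp : ∀ u, 0 < p u) (hq : ∀ u, 0 < q u)
    (hp1 : ∫ u, p u = 1) (hq1 : ∫ u, q u = 1)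
    (T : (Fin n → ℝ) → ℝ) (hT : Measurable T)
    (hint1 : Integrable fun u => p u * Real.log (1 - σ (T u)))
    (hint2 : Integrable fun u => q u * Real.log (σ (T u)))
    (hint3 : Integrable fun u => p u * Real.log (1 - σ (Real.log (q u) - Real.log (p u))))
    (hint4 : Integrable fun u => q u * Real.log (σ (Real.log (q u) - Real.log (p u)))) :
    (∫ u, p u * Real.log (1 - σ (T u))) + (∫ u, q u * Real.log (σ (T u))) ≤
      (∫ u, p u * Real.log (1 - σ (Real.log (q u) - Real.log (p u)))) +
        (∫ u, q u * Real.log (σ (Real.log (q u) - Real.log (p u)))) := by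
  rw [← integral_add hint1 hint2, ← integral_add hint3 hint4]
  apply integral_mono (hint1.add hint2) (hint3.add hint4)
  intro u
  have hpu := hp u
  have hqu := hq u
  have hσstar : σ (Real.log (q u) - Real.log (p u)) = q u / (p u + q u) := by
    rw [hσ, neg_sub, Real.exp_sub, Real.exp_log hpu, Real.exp_log hqu]
    rw [div_eq_div_iff (by positivity) (by positivity)]
    field_simp
    ring
  have hσT0 : 0 < σ (T u) := by
    rw [hσ]
    positivity
  have hσT1 : σ (T u) < 1 := by
    rw [hσ]
    rw [div_lt_one (by positivity)]
    linarith [Real.exp_pos (-(T u))]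
  have h1 : (1 : ℝ) - q u / (p u + q u) = p u / (p u + q u) := by
    have h : p u + q u ≠ 0 := by positivity
    field_simp
    ring
  simp only [Pi.add_apply, hσstar, h1]
  exact key_ineq (p u) (q u) (σ (T u)) hpu hqu hσT0 hσT1
end

section
/- For a, b > 0, the pointwise supremum over x ∈ ℝ of a·log(1 − σ(x)) + b·log(σ(x)) equals a·log(a/(a+b)) + b·log(b/(a+b)), attained at x = log(b/a). -/
/-- For `a, b > 0`, the supremum over `x ∈ ℝ` of `a·log(1-σ(x)) + b·log(σ(x))` equals
`a·log(a/(a+b)) + b·log(b/(a+b))`, attained at `x = log(b/a)`. -/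
theorem stmt_4 (a b : ℝ) (ha : 0 < a) (hb : 0 < b)
    (σ : ℝ → ℝ) (hσ : ∀ x, σ x = 1 / (1 + Real.exp (-x))) :
    (a * Real.log (1 - σ (Real.log (b / a))) + b * Real.log (σ (Real.log (b / a))) =
      a * Real.log (a / (a + b)) + b * Real.log (b / (a + b))) ∧
    ∀ x : ℝ, a * Real.log (1 - σ x) + b * Real.log (σ x) ≤
      a * Real.log (a / (a + b)) + b * Real.log (b / (a + b)) := by
  have hab : 0 < a + b := by linarith
  constructor
  · have hexp : Real.exp (-(Real.log (b / a))) = a / b := by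
      rw [Real.exp_neg, Real.exp_log (by positivity)]
      field_simp
    rw [hσ, hexp]
    have h1 : (1 : ℝ) + a / b = (a + b) / b := by field_simp; ring
    rw [h1]
    have h2 : (1 : ℝ) / ((a + b) / b) = b / (a + b) := by
      field_simp
    rw [h2]
    have h3 : 1 - b / (a + b) = a / (a + b) := by field_simp; ring
    rw [h3]
  · intro x
    set p := σ x with hp
    have hpv : p = 1 / (1 + Real.exp (-x)) := hσ x
    have he : 0 < Real.exp (-x) := Real.exp_pos _
    have hp0 : 0 < p := by rw [hpv]; positivity
    have hp1 : p < 1 := by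
      rw [hpv]
      rw [div_lt_one (by linarith)]
      linarith
    have hq0 : 0 < 1 - p := by linarith
    have hL1 : Real.log (1 - p) - Real.log (a / (a + b)) ≤ (1 - p) * (a + b) / a - 1 := by
      rw [← Real.log_div hq0.ne' (by positivity)]
      have := Real.log_le_sub_one_of_pos (show 0 < (1 - p) / (a / (a + b)) by positivity)
      calc Real.log ((1 - p) / (a / (a + b))) ≤ (1 - p) / (a / (a + b)) - 1 := this
        _ = (1 - p) * (a + b) / a - 1 := by field_simp
    have hL2 : Real.log p - Real.log (b / (a + b)) ≤ p * (a + b) / b - 1 := by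
      rw [← Real.log_div hp0.ne' (by positivity)]
      have := Real.log_le_sub_one_of_pos (show 0 < p / (b / (a + b)) by positivity)
      calc Real.log (p / (b / (a + b))) ≤ p / (b / (a + b)) - 1 := this
        _ = p * (a + b) / b - 1 := by field_simp
    have k1 : a * (Real.log (1 - p) - Real.log (a / (a + b))) ≤ (1 - p) * (a + b) - a := by
      have := mul_le_mul_of_nonneg_left hL1 ha.le
      calc a * (Real.log (1 - p) - Real.log (a / (a + b)))
          ≤ a * ((1 - p) * (a + b) / a - 1) := this
        _ = (1 - p) * (a + b) - a := by field_simp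
    have k2 : b * (Real.log p - Real.log (b / (a + b))) ≤ p * (a + b) - b := by
      have := mul_le_mul_of_nonneg_left hL2 hb.le
      calc b * (Real.log p - Real.log (b / (a + b)))
          ≤ b * (p * (a + b) / b - 1) := this
        _ = p * (a + b) - b := by field_simp
    nlinarith [k1, k2]
end

section
/- Let p, q be strictly positive probability densities w.r.t. μ. Then ∫ p·log((p)/((p+q)/2)) dμ + ∫ q·log((q)/((p+q)/2)) dμ ≥ 0, with equality iff p = q a.e.; i.e., the Jensen–Shannon-type functional ∫ p·log(1 − σ(T(u))) dμ + ∫ q·log(σ(T(u))) dμ evaluated at the optimal T* equals −2·log 2 + 2·JSD(p‖q) ≥ −2·log 2, with equality iff p = q a.e. -/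
open MeasureTheory

lemma key_ge (a m : ℝ) (ha : 0 < a) (hm : 0 < m) :
    a - m ≤ a * Real.log (a / m) := by
  have h := Real.log_le_sub_one_of_pos (div_pos hm ha)
  rw [Real.log_div hm.ne' ha.ne'] at h
  rw [Real.log_div ha.ne' hm.ne']
  have h2 : 1 - m / a ≤ Real.log a - Real.log m := by linarith
  have h3 := mul_le_mul_of_nonneg_left h2 ha.le
  have h4 : a * (1 - m / a) = a - m := by field_simp
  linarith

lemma key_gt (a m : ℝ) (ha : 0 < a) (hm : 0 < m) (hne : a ≠ m) :
    a - m < a * Real.log (a / m) := by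
  have hone : m / a ≠ 1 := by
    intro h
    have := (div_eq_one_iff_eq ha.ne').mp h
    exact hne this.symm
  have h := Real.log_lt_sub_one_of_pos (div_pos hm ha) hone
  rw [Real.log_div hm.ne' ha.ne'] at h
  rw [Real.log_div ha.ne' hm.ne']
  have h2 : 1 - m / a < Real.log a - Real.log m := by linarith
  have h3 := mul_lt_mul_of_pos_left h2 ha
  have h4 : a * (1 - m / a) = a - m := by field_simp
  linarith

lemma F_nonneg (a b : ℝ) (ha : 0 < a) (hb : 0 < b) :
    0 ≤ a * Real.log (a / ((a + b) / 2)) + b * Real.log (b / ((a + b) / 2)) := by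
  have hm : 0 < (a + b) / 2 := by linarith
  have h1 := key_ge a ((a + b) / 2) ha hm
  have h2 := key_ge b ((a + b) / 2) hb hm
  linarith

lemma F_pos (a b : ℝ) (ha : 0 < a) (hb : 0 < b) (hne : a ≠ b) :
    0 < a * Real.log (a / ((a + b) / 2)) + b * Real.log (b / ((a + b) / 2)) := by
  have hm : 0 < (a + b) / 2 := by linarith
  have hne' : a ≠ (a + b) / 2 := fun h => hne (by linarith)
  have h1 := key_gt a ((a + b) / 2) ha hm hne'
  have h2 := key_ge b ((a + b) / 2) hb hm
  linarith

lemma sigma_eq (σ : ℝ → ℝ) (hσ : ∀ x, σ x = 1 / (1 + Real.exp (-x)))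
    (a b : ℝ) (ha : 0 < a) (hb : 0 < b) :
    σ (Real.log b - Real.log a) = b / (a + b) := by
  rw [hσ, neg_sub, Real.exp_sub, Real.exp_log ha, Real.exp_log hb]
  rw [div_eq_div_iff (by positivity) (by positivity)]
  field_simp
  ring

lemma log_half (a b : ℝ) (ha : 0 < a) (hb : 0 < b) :
    Real.log (a / (a + b)) = Real.log (a / ((a + b) / 2)) - Real.log 2 := by
  have h : a / (a + b) = (a / ((a + b) / 2)) / 2 := by
    field_simp
  rw [h, Real.log_div (by positivity) (by norm_num)]


/-- Jensen–Shannon-type inequality: for strictly positive densities `p, q`,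
`KL(p‖(p+q)/2) + KL(q‖(p+q)/2) ≥ 0` with equality iff `p = q` a.e.; moreover the
discriminator objective evaluated at the optimal `T* = log q - log p` equals
`-2 log 2 + (KL(p‖(p+q)/2) + KL(q‖(p+q)/2)) ≥ -2 log 2`, with equality iff `p = q` a.e. -/
theorem stmt_13 {Ω : Type*} [MeasurableSpace Ω] (μ : Measure Ω) [SigmaFinite μ]
    (σ : ℝ → ℝ) (hσ : ∀ x, σ x = 1 / (1 + Real.exp (-x)))
    (p q : Ω → ℝ) (hpm : Measurable p) (hqm : Measurable q)
    (hp : ∀ u, 0 < p u) (hq : ∀ u, 0 < q u)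
    (hp1 : ∫ u, p u ∂μ = 1) (hq1 : ∫ u, q u ∂μ = 1)
    (hint1 : Integrable (fun u => p u * Real.log (p u / ((p u + q u) / 2))) μ)
    (hint2 : Integrable (fun u => q u * Real.log (q u / ((p u + q u) / 2))) μ)
    (hint3 : Integrable (fun u => p u * Real.log (1 - σ (Real.log (q u) - Real.log (p u)))) μ)
    (hint4 : Integrable (fun u => q u * Real.log (σ (Real.log (q u) - Real.log (p u)))) μ) :
    (0 ≤ (∫ u, p u * Real.log (p u / ((p u + q u) / 2)) ∂μ) +
          (∫ u, q u * Real.log (q u / ((p u + q u) / 2)) ∂μ)) ∧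
    ((∫ u, p u * Real.log (p u / ((p u + q u) / 2)) ∂μ) +
          (∫ u, q u * Real.log (q u / ((p u + q u) / 2)) ∂μ) = 0 ↔ p =ᵐ[μ] q) ∧
    ((∫ u, p u * Real.log (1 - σ (Real.log (q u) - Real.log (p u))) ∂μ) +
        (∫ u, q u * Real.log (σ (Real.log (q u) - Real.log (p u))) ∂μ) =
      -2 * Real.log 2 +
        ((∫ u, p u * Real.log (p u / ((p u + q u) / 2)) ∂μ) +
          (∫ u, q u * Real.log (q u / ((p u + q u) / 2)) ∂μ))) ∧
    (-2 * Real.log 2 ≤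
      (∫ u, p u * Real.log (1 - σ (Real.log (q u) - Real.log (p u))) ∂μ) +
        (∫ u, q u * Real.log (σ (Real.log (q u) - Real.log (p u))) ∂μ)) ∧
    ((∫ u, p u * Real.log (1 - σ (Real.log (q u) - Real.log (p u))) ∂μ) +
        (∫ u, q u * Real.log (σ (Real.log (q u) - Real.log (p u))) ∂μ) =
      -2 * Real.log 2 ↔ p =ᵐ[μ] q) := by
  have intP : Integrable p μ := by
    by_contra h; rw [integral_undef h] at hp1; norm_num at hp1
  have intQ : Integrable q μ := by
    by_contra h; rw [integral_undef h] at hq1; norm_num at hq1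
  -- Part 1
  have part1 : 0 ≤ (∫ u, p u * Real.log (p u / ((p u + q u) / 2)) ∂μ) +
      (∫ u, q u * Real.log (q u / ((p u + q u) / 2)) ∂μ) := by
    rw [← integral_add hint1 hint2]
    exact integral_nonneg fun u => F_nonneg (p u) (q u) (hp u) (hq u)
  -- Part 2
  have part2 : (∫ u, p u * Real.log (p u / ((p u + q u) / 2)) ∂μ) +
      (∫ u, q u * Real.log (q u / ((p u + q u) / 2)) ∂μ) = 0 ↔ p =ᵐ[μ] q := by
    constructor
    · intro h
      have hz : ∫ u, (p u * Real.log (p u / ((p u + q u) / 2)) +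
          q u * Real.log (q u / ((p u + q u) / 2))) ∂μ = 0 := by
        rw [integral_add hint1 hint2]; exact h
      have hae := (integral_eq_zero_iff_of_nonneg
        (fun u => F_nonneg (p u) (q u) (hp u) (hq u)) (hint1.add hint2)).mp hz
      filter_upwards [hae] with u hu
      by_contra hne
      have := F_pos (p u) (q u) (hp u) (hq u) hne
      simp only [Pi.zero_apply] at hu
      linarith
    · intro h
      have e1 : (fun u => p u * Real.log (p u / ((p u + q u) / 2))) =ᵐ[μ]
          (fun _ => (0 : ℝ)) := by
        filter_upwards [h] with u hu
        rw [hu]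
        have h2 : (q u + q u) / 2 = q u := by ring
        rw [h2, div_self (hq u).ne', Real.log_one, mul_zero]
      have e2 : (fun u => q u * Real.log (q u / ((p u + q u) / 2))) =ᵐ[μ]
          (fun _ => (0 : ℝ)) := by
        filter_upwards [h] with u hu
        rw [hu]
        have h2 : (q u + q u) / 2 = q u := by ring
        rw [h2, div_self (hq u).ne', Real.log_one, mul_zero]
      rw [integral_congr_ae e1, integral_congr_ae e2, integral_zero, add_zero]
  -- Part 3
  have eqf1 : ∀ u, p u * Real.log (1 - σ (Real.log (q u) - Real.log (p u))) =
      p u * Real.log (p u / ((p u + q u) / 2)) - p u * Real.log 2 := by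
    intro u
    rw [sigma_eq σ hσ (p u) (q u) (hp u) (hq u)]
    have hpq : p u + q u ≠ 0 := by
      have := hp u; have := hq u; positivity
    have h1 : 1 - q u / (p u + q u) = p u / (p u + q u) := by
      field_simp
      ring
    rw [h1, log_half (p u) (q u) (hp u) (hq u)]
    ring
  have eqf2 : ∀ u, q u * Real.log (σ (Real.log (q u) - Real.log (p u))) =
      q u * Real.log (q u / ((p u + q u) / 2)) - q u * Real.log 2 := by
    intro u
    rw [sigma_eq σ hσ (p u) (q u) (hp u) (hq u)]
    have h0 : p u + q u = q u + p u := by ring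
    rw [h0, log_half (q u) (p u) (hq u) (hp u)]
    ring
  have int3' : ∫ u, p u * Real.log (1 - σ (Real.log (q u) - Real.log (p u))) ∂μ =
      (∫ u, p u * Real.log (p u / ((p u + q u) / 2)) ∂μ) - Real.log 2 := by
    have : (fun u => p u * Real.log (1 - σ (Real.log (q u) - Real.log (p u)))) =
        fun u => p u * Real.log (p u / ((p u + q u) / 2)) - p u * Real.log 2 :=
      funext eqf1
    rw [this, integral_sub hint1 (intP.mul_const _), integral_mul_const, hp1, one_mul]
  have int4' : ∫ u, q u * Real.log (σ (Real.log (q u) - Real.log (p u))) ∂μ =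
      (∫ u, q u * Real.log (q u / ((p u + q u) / 2)) ∂μ) - Real.log 2 := by
    have : (fun u => q u * Real.log (σ (Real.log (q u) - Real.log (p u)))) =
        fun u => q u * Real.log (q u / ((p u + q u) / 2)) - q u * Real.log 2 :=
      funext eqf2
    rw [this, integral_sub hint2 (intQ.mul_const _), integral_mul_const, hq1, one_mul]
  have part3 : (∫ u, p u * Real.log (1 - σ (Real.log (q u) - Real.log (p u))) ∂μ) +
      (∫ u, q u * Real.log (σ (Real.log (q u) - Real.log (p u))) ∂μ) =
      -2 * Real.log 2 +
        ((∫ u, p u * Real.log (p u / ((p u + q u) / 2)) ∂μ) +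
          (∫ u, q u * Real.log (q u / ((p u + q u) / 2)) ∂μ)) := by
    rw [int3', int4']; ring
  refine ⟨part1, part2, part3, by linarith, ?_⟩
  constructor
  · intro h; exact part2.mp (by linarith)
  · intro h; have := part2.mpr h; linarith
end
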